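/- Let X be a strong PP-space, Y a topological space and (Z, λ) a locally convex equiconnected space. Let f : X × Y → Z be such that the map x ↦ f(x,y) is continuous for every y ∈ Y and the set {x ∈ X : the map y ↦ f(x,y) is Baire-one} is dense in X. Then f is the pointwise limit of a sequence of Baire-one maps X × Y → Z (i.e. f is of the second Baire class, so (X, Y, Z) is a Rudin 1-triple). -/

import Mathlib

open Set Function Filter Topology

universe u

/-- An *equiconnecting* map on `Z`: a map `λ : Z × Z × [0,1] → Z`, continuous on
`Z × Z × [0,1]`, with `λ(x,y,0) = x`, `λ(x,y,1) = y` and `λ(x,x,t) = x`. -/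
structure IsEquiconnecting {Z : Type*} [TopologicalSpace Z] (lam : Z → Z → ℝ → Z) : Prop where
  continuousOn : ContinuousOn (fun p : Z × Z × ℝ => lam p.1 p.2.1 p.2.2)
    (Set.univ ×ˢ Set.univ ×ˢ Set.Icc (0 : ℝ) 1)
  map_zero : ∀ x y : Z, lam x y 0 = x
  map_one : ∀ x y : Z, lam x y 1 = y
  map_diag : ∀ x : Z, ∀ t ∈ Set.Icc (0 : ℝ) 1, lam x x t = x

/-- `lambdaIter lam n` is the map `λ_{n+1} : Z^{n+1} × S_{n+1} → Z` from the paper,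
defined recursively. -/
noncomputable def lambdaIter {Z : Type*} (lam : Z → Z → ℝ → Z) :
    (n : ℕ) → (Fin (n + 1) → Z) → (Fin (n + 1) → ℝ) → Z
  | 0, x, _ => x 0
  | n + 1, x, a =>
      if 0 < a 0 + a 1 then
        lambdaIter lam n
          (Fin.cons (lam (x 0) (x 1) (a 1 / (a 0 + a 1))) fun i => x i.succ.succ)
          (Fin.cons (a 0 + a 1) fun i => a i.succ.succ)
      else
        lambdaIter lam n (fun i => x i.succ) fun i => a i.succ

/-- `lambdaIterSet lam A n` is the set `λ^n(A)`:  `λ^0(A) = A` and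
`λ^{n+1}(A) = λ(λ^n(A) × A × [0,1])`. -/
def lambdaIterSet {Z : Type*} (lam : Z → Z → ℝ → Z) (A : Set Z) : ℕ → Set Z
  | 0 => A
  | n + 1 => (fun p : Z × Z × ℝ => lam p.1 p.2.1 p.2.2) ''
      (lambdaIterSet lam A n ×ˢ A ×ˢ Set.Icc (0 : ℝ) 1)

/-- `λ^∞(A) = ⋃_{n ≥ 1} λ^n(A)`. -/
def lambdaInftySet {Z : Type*} (lam : Z → Z → ℝ → Z) (A : Set Z) : Set Z :=
  ⋃ n : ℕ, lambdaIterSet lam A (n + 1)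

/-- An equiconnected space `(Z, λ)` is locally convex if every point has arbitrarily small
neighborhoods `V` with `λ^∞(V)` inside a given neighborhood. -/
def IsLocallyConvexEquiconnected {Z : Type*} [TopologicalSpace Z] (lam : Z → Z → ℝ → Z) :
    Prop :=
  ∀ z : Z, ∀ U ∈ nhds z, ∃ V ∈ nhds z, lambdaInftySet lam V ⊆ U

/-- A map is Baire-one if it is the pointwise limit of a sequence of continuous maps. -/
def BaireOne {Y Z : Type*} [TopologicalSpace Y] [TopologicalSpace Z] (g : Y → Z) : Prop :=
  ∃ h : ℕ → Y → Z, (∀ n, Continuous (h n)) ∧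
    ∀ y, Filter.Tendsto (fun n => h n y) Filter.atTop (nhds (g y))

/-- A locally finite partition of unity on `X`: continuous `[0,1]`-valued functions whose
supports (closures of the sets where they are nonzero) form a locally finite family and whose
pointwise sum is `1`. -/
def IsLocFinPartitionOfUnity {I X : Type*} [TopologicalSpace X] (φ : I → X → ℝ) : Prop :=
  (∀ i, Continuous (φ i)) ∧ (∀ i x, φ i x ∈ Set.Icc (0 : ℝ) 1) ∧
    (LocallyFinite fun i => closure (Function.support (φ i))) ∧ ∀ x, ∑ᶠ i, φ i x = 1

/-- A strong PP-space: for every dense `D ⊆ X` there are a sequence of locally finite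
partitions of unity and families of points of `D` such that points attached to the supports
containing `x` converge to `x` uniformly in the index, in the sense of condition (3). -/
def IsStrongPPSpace (X : Type*) [TopologicalSpace X] : Prop :=
  ∀ D : Set X, Dense D →
    ∃ (I : ℕ → Type u) (φ : ∀ n, I n → X → ℝ) (p : ∀ n, I n → X),
      (∀ n, IsLocFinPartitionOfUnity (φ n)) ∧ (∀ n i, p n i ∈ D) ∧
      ∀ x : X, ∀ U ∈ nhds x, ∃ n₀ : ℕ, ∀ n ≥ n₀, ∀ i : I n,
        x ∈ closure (Function.support (φ n i)) → p n i ∈ U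

/-- A zero set: the preimage of `{0}` under a continuous function `X → [0,1]`. -/
def IsZeroSet {X : Type*} [TopologicalSpace X] (A : Set X) : Prop :=
  ∃ f : X → ℝ, Continuous f ∧ (∀ x, f x ∈ Set.Icc (0 : ℝ) 1) ∧ A = f ⁻¹' {0}

/-- A cozero set: the preimage of `(0,1]` under a continuous function `X → [0,1]`. -/
def IsCozeroSet {X : Type*} [TopologicalSpace X] (A : Set X) : Prop :=
  ∃ f : X → ℝ, Continuous f ∧ (∀ x, f x ∈ Set.Icc (0 : ℝ) 1) ∧ A = f ⁻¹' Set.Ioc (0 : ℝ) 1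

/-- A functionally ambiguous set: simultaneously a countable union of zero sets and a
countable intersection of cozero sets. -/
def IsFunctionallyAmbiguous {X : Type*} [TopologicalSpace X] (A : Set X) : Prop :=
  (∃ F : ℕ → Set X, (∀ n, IsZeroSet (F n)) ∧ A = ⋃ n, F n) ∧
    ∃ B : ℕ → Set X, (∀ n, IsCozeroSet (B n)) ∧ A = ⋂ n, B n

/-- A discrete family of sets: every point has a neighborhood meeting at most one member. -/
def IsDiscreteFamily {I X : Type*} [TopologicalSpace X] (A : I → Set X) : Prop :=
  ∀ x : X, ∃ U ∈ nhds x, {i : I | (U ∩ A i).Nonempty}.Subsingleton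

/-- Weakly collectionwise normal: every discrete family of zero sets can be separated by a
discrete family of cozero sets. -/
def WeaklyCollectionwiseNormal (X : Type*) [TopologicalSpace X] : Prop :=
  ∀ (S : Type u) (F : S → Set X), (∀ s, IsZeroSet (F s)) → IsDiscreteFamily F →
    ∃ U : S → Set X, (∀ s, IsCozeroSet (U s)) ∧ IsDiscreteFamily U ∧ ∀ s, F s ⊆ U s

/-- A contracting structure on `Z`: a continuous `γ : Z × [0,1] → Z` with `γ(z,0) = z` and
`γ(z,1) = z₀`. -/
structure IsContracting {Z : Type*} [TopologicalSpace Z] (γ : Z → ℝ → Z) (z₀ : Z) :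
    Prop where
  continuousOn : ContinuousOn (fun p : Z × ℝ => γ p.1 p.2) (Set.univ ×ˢ Set.Icc (0 : ℝ) 1)
  map_zero : ∀ z : Z, γ z 0 = z
  map_one : ∀ z : Z, γ z 1 = z₀


section CombAux

open scoped Classical

variable {I : Type*} {Z : Type*} [TopologicalSpace Z]

/-- Iterated equiconnected combination over a finite index set, processed in decreasing
order of a chosen linear order, with a softening parameter `δ`. -/
noncomputable def comb [LinearOrder I] (lam : Z → Z → ℝ → Z) (z₀ : Z)
    (z : I → Z) (a : I → ℝ) (δ : ℝ) : Finset I → Z := fun s =>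
  if h : s.Nonempty then
    lam (comb lam z₀ z a δ (s.erase (s.max' h))) (z (s.max' h))
      (min 1 (a (s.max' h) / max (∑ i ∈ s, a i) δ))
  else z₀
termination_by s => s.card
decreasing_by exact Finset.card_erase_lt_of_mem (Finset.max'_mem _ h)

variable [LinearOrder I] (lam : Z → Z → ℝ → Z) (z₀ : Z)

lemma comb_empty (z : I → Z) (a : I → ℝ) (δ : ℝ) :
    comb lam z₀ z a δ (∅ : Finset I) = z₀ := by
  rw [comb]; simp

lemma comb_of_nonempty (z : I → Z) (a : I → ℝ) (δ : ℝ) {s : Finset I} (h : s.Nonempty) :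
    comb lam z₀ z a δ s =
      lam (comb lam z₀ z a δ (s.erase (s.max' h))) (z (s.max' h))
        (min 1 (a (s.max' h) / max (∑ i ∈ s, a i) δ)) := by
  rw [comb]; rw [dif_pos h]

/-- Terms with zero weight can be dropped. -/
lemma comb_filter (hzero : ∀ w v, lam w v 0 = w) (z : I → Z) (a : I → ℝ) (δ : ℝ)
    (s : Finset I) :
    comb lam z₀ z a δ (s.filter fun i => a i ≠ 0) = comb lam z₀ z a δ s := by
  induction s using Finset.strongInductionOn with
  | _ s ih =>
    rcases s.eq_empty_or_nonempty with rfl | hs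
    · simp
    set M := s.max' hs with hM
    by_cases haM : a M = 0
    · have hfe : (s.filter fun i => a i ≠ 0) = ((s.erase M).filter fun i => a i ≠ 0) := by
        rw [Finset.filter_erase]
        rw [Finset.erase_eq_of_notMem]
        simp only [Finset.mem_filter, not_and]
        intro _ h; exact absurd haM h
      rw [hfe, ih _ (Finset.erase_ssubset (s.max'_mem hs))]
      rw [comb_of_nonempty lam z₀ z a δ hs, ← hM, haM]
      simp [hzero]
    · have hMmem : M ∈ s.filter fun i => a i ≠ 0 := by
        simp [Finset.mem_filter, s.max'_mem hs, haM]
        exact s.max'_mem hs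
      have hfne : (s.filter fun i => a i ≠ 0).Nonempty := ⟨M, hMmem⟩
      have hmax : (s.filter fun i => a i ≠ 0).max' hfne = M := by
        refine le_antisymm (Finset.max'_subset hfne (Finset.filter_subset _ s)) ?_
        exact Finset.le_max' _ M hMmem
      rw [comb_of_nonempty lam z₀ z a δ hs, comb_of_nonempty lam z₀ z a δ hfne, hmax, ← hM]
      have hsum : (∑ i ∈ s.filter fun i => a i ≠ 0, a i) = ∑ i ∈ s, a i :=
        Finset.sum_filter_ne_zero s
      rw [hsum, ← Finset.filter_erase, ih _ (Finset.erase_ssubset (s.max'_mem hs))]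

/-- If `δ` is below all the weights, the softened combination agrees with the exact one. -/
lemma comb_delta_eq (z : I → Z) (a : I → ℝ) {δ : ℝ} (hδ : 0 ≤ δ) (s : Finset I)
    (hle : ∀ i ∈ s, δ ≤ a i) (h0 : ∀ i ∈ s, 0 ≤ a i) :
    comb lam z₀ z a δ s = comb lam z₀ z a 0 s := by
  induction s using Finset.strongInductionOn with
  | _ s ih =>
    rcases s.eq_empty_or_nonempty with rfl | hs
    · simp [comb_empty]
    have hMs := s.max'_mem hs
    have hsum : δ ≤ ∑ i ∈ s, a i :=
      le_trans (hle _ hMs) (Finset.single_le_sum h0 hMs)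
    rw [comb_of_nonempty lam z₀ z a δ hs, comb_of_nonempty lam z₀ z a 0 hs]
    rw [max_eq_left hsum, max_eq_left (le_trans hδ hsum)]
    rw [ih _ (Finset.erase_ssubset hMs) (fun i hi => hle i (Finset.mem_of_mem_erase hi))
      (fun i hi => h0 i (Finset.mem_of_mem_erase hi))]

/-- Joint continuity of the softened combination in the parameters, for fixed finite `s`. -/
lemma comb_continuous {W : Type*} [TopologicalSpace W]
    (hlam : ContinuousOn (fun p : Z × Z × ℝ => lam p.1 p.2.1 p.2.2)
      (Set.univ ×ˢ Set.univ ×ˢ Set.Icc (0 : ℝ) 1))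
    (z : I → W → Z) (hz : ∀ i, Continuous (z i))
    (a : I → W → ℝ) (ha : ∀ i, Continuous (a i)) (ha0 : ∀ i w, 0 ≤ a i w)
    {δ : ℝ} (hδ : 0 < δ) (s : Finset I) :
    Continuous fun w => comb lam z₀ (fun i => z i w) (fun i => a i w) δ s := by
  induction s using Finset.strongInductionOn with
  | _ s ih =>
    rcases s.eq_empty_or_nonempty with rfl | hs
    · simpa [comb_empty] using continuous_const
    set M := s.max' hs with hM
    have hrw : (fun w => comb lam z₀ (fun i => z i w) (fun i => a i w) δ s)
        = fun w => lam (comb lam z₀ (fun i => z i w) (fun i => a i w) δ (s.erase M))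
          (z M w) (min 1 (a M w / max (∑ i ∈ s, a i w) δ)) := by
      funext w; rw [comb_of_nonempty lam z₀ _ _ δ hs]
    rw [hrw]
    have hC : Continuous fun w =>
        comb lam z₀ (fun i => z i w) (fun i => a i w) δ (s.erase M) :=
      ih _ (Finset.erase_ssubset (s.max'_mem hs))
    have hdenom : ∀ w, max (∑ i ∈ s, a i w) δ ≠ 0 := fun w =>
      (lt_of_lt_of_le hδ (le_max_right _ _)).ne'
    have hτ : Continuous fun w => min 1 (a M w / max (∑ i ∈ s, a i w) δ) := by
      refine continuous_const.min (Continuous.div (ha M) ?_ hdenom)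
      exact (continuous_finset_sum s fun i _ => ha i).max continuous_const
    refine hlam.comp_continuous (hC.prodMk ((hz M).prodMk hτ)) fun w => ?_
    refine ⟨mem_univ _, mem_univ _, ?_⟩
    exact ⟨le_min zero_le_one (div_nonneg (ha0 M w)
      (le_trans hδ.le (le_max_right _ _))), min_le_left _ _⟩

/-- Pointwise convergence of exact combinations when the points converge. -/
lemma comb_tendsto
    (hlam : ContinuousOn (fun p : Z × Z × ℝ => lam p.1 p.2.1 p.2.2)
      (Set.univ ×ˢ Set.univ ×ˢ Set.Icc (0 : ℝ) 1))
    (z : ℕ → I → Z) (zl : I → Z) (a : I → ℝ) (s : Finset I)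
    (hz : ∀ i ∈ s, Tendsto (fun m => z m i) atTop (nhds (zl i)))
    (ha0 : ∀ i ∈ s, 0 ≤ a i) :
    Tendsto (fun m => comb lam z₀ (z m) a 0 s) atTop (nhds (comb lam z₀ zl a 0 s)) := by
  induction s using Finset.strongInductionOn with
  | _ s ih =>
    rcases s.eq_empty_or_nonempty with rfl | hs
    · simp only [comb_empty]; exact tendsto_const_nhds
    set M := s.max' hs with hM
    have hMs := s.max'_mem hs
    set τ : ℝ := min 1 (a M / max (∑ i ∈ s, a i) 0) with hτ
    have hτmem : τ ∈ Set.Icc (0 : ℝ) 1 :=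
      ⟨le_min zero_le_one (div_nonneg (ha0 M hMs) (le_max_right _ _)), min_le_left _ _⟩
    have hrw : ∀ (w : I → Z), comb lam z₀ w a 0 s =
        lam (comb lam z₀ w a 0 (s.erase M)) (w M) τ := fun w =>
      comb_of_nonempty lam z₀ w a 0 hs
    simp only [hrw]
    have hC := ih _ (Finset.erase_ssubset hMs)
      (fun i hi => hz i (Finset.mem_of_mem_erase hi))
      (fun i hi => ha0 i (Finset.mem_of_mem_erase hi))
    have hcw := hlam (comb lam z₀ zl a 0 (s.erase M), (zl M, τ))
      ⟨mem_univ _, mem_univ _, hτmem⟩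
    have harg : Tendsto (fun m => ((comb lam z₀ (z m) a 0 (s.erase M)), (z m M, τ)))
        atTop (nhdsWithin ((comb lam z₀ zl a 0 (s.erase M), (zl M, τ)) : Z × Z × ℝ)
          ((Set.univ : Set Z) ×ˢ (Set.univ : Set Z) ×ˢ Set.Icc (0 : ℝ) 1)) := by
      rw [tendsto_nhdsWithin_iff]
      constructor
      · exact hC.prodMk_nhds ((hz M hMs).prodMk_nhds tendsto_const_nhds)
      · exact Filter.Eventually.of_forall fun m => ⟨mem_univ _, mem_univ _, hτmem⟩
    exact hcw.tendsto.comp harg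

/-- Exact combinations of points of `V` with positive weights lie in the iterated hull. -/
lemma comb_mem (hone : ∀ w v, lam w v 1 = v) (z : I → Z) (a : I → ℝ) {V : Set Z}
    (s : Finset I) (hs : s.Nonempty) (ha : ∀ i ∈ s, 0 < a i) (hz : ∀ i ∈ s, z i ∈ V) :
    ∃ k, comb lam z₀ z a 0 s ∈ lambdaIterSet lam V k := by
  induction s using Finset.strongInductionOn with
  | _ s ih =>
    have hMs := s.max'_mem hs
    set M := s.max' hs with hM
    rcases Finset.eq_empty_or_nonempty (s.erase M) with he | hne
    · have hsM : s = {M} := by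
        apply Finset.eq_singleton_iff_unique_mem.2
        refine ⟨hMs, fun i hi => ?_⟩
        by_contra hiM
        exact absurd (Finset.mem_erase.2 ⟨hiM, hi⟩) (by simp [he])
      rw [comb_of_nonempty lam z₀ z a 0 hs]
      have hsum : (∑ i ∈ s, a i) = a M := by rw [hsM]; simp
      rw [← hM, hsum, max_eq_left (ha M hMs).le, div_self (ha M hMs).ne']
      simp only [min_self]
      rw [hone]
      exact ⟨0, hz M hMs⟩
    · obtain ⟨k, hk⟩ := ih _ (Finset.erase_ssubset hMs) hne
        (fun i hi => ha i (Finset.mem_of_mem_erase hi))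
        (fun i hi => hz i (Finset.mem_of_mem_erase hi))
      rw [comb_of_nonempty lam z₀ z a 0 hs]
      refine ⟨k + 1, ⟨(comb lam z₀ z a 0 (s.erase M), (z M,
        min 1 (a M / max (∑ i ∈ s, a i) 0))), ⟨hk, hz M hMs, ?_⟩, rfl⟩⟩
      exact ⟨le_min zero_le_one (div_nonneg (ha M hMs).le (le_max_right _ _)),
        min_le_left _ _⟩

end CombAux

lemma lambdaIterSet_subset_infty {Z : Type*} (lam : Z → Z → ℝ → Z)
    (hzero : ∀ w v, lam w v 0 = w) (V : Set Z) (k : ℕ) :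
    lambdaIterSet lam V k ⊆ lambdaInftySet lam V := by
  cases k with
  | zero =>
    intro v hv
    exact Set.mem_iUnion.2 ⟨0, ⟨(v, v, 0), ⟨hv, hv, le_refl _, zero_le_one⟩, hzero v v⟩⟩
  | succ k => intro v hv; exact Set.mem_iUnion.2 ⟨k, hv⟩


/-- If `X` is a strong PP-space, `Y` a topological space and `(Z, λ)` a locally
convex equiconnected space, then every `f : X × Y → Z` which is continuous in the first
variable and has Baire-one `y`-sections for a dense set of `x`'s is a pointwise limit of a
sequence of Baire-one maps (hence of the second Baire class), i.e. `(X, Y, Z)` is a Rudin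
`1`-triple. -/
theorem rudin_one_triple_of_strongPP {X Y Z : Type*} [TopologicalSpace X] [TopologicalSpace Y]
    [TopologicalSpace Z] (hX : IsStrongPPSpace.{u} X)
    (lam : Z → Z → ℝ → Z) (hlam : IsEquiconnecting lam)
    (hconv : IsLocallyConvexEquiconnected lam)
    (f : X × Y → Z)
    (hsep : ∀ y : Y, Continuous fun x => f (x, y))
    (hdense : Dense {x : X | BaireOne fun y => f (x, y)}) :
    ∃ g : ℕ → X × Y → Z, (∀ n, BaireOne (g n)) ∧
      ∀ q : X × Y, Filter.Tendsto (fun n => g n q) Filter.atTop (nhds (f q)) := by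
  classical
  rcases isEmpty_or_nonempty (X × Y) with hemp | hne
  · have hcont : ∀ g : X × Y → Z, Continuous g := by
      intro g
      rw [continuous_def]
      intro s _
      have : g ⁻¹' s = ∅ := Set.eq_empty_of_isEmpty _
      rw [this]; exact isOpen_empty
    exact ⟨fun _ => f, fun _ => ⟨fun _ => f, fun _ => hcont f, fun q => isEmptyElim q⟩,
      fun q => isEmptyElim q⟩
  obtain ⟨q₀⟩ := hne
  obtain ⟨I, φ, p, hφ, hpD, hPP⟩ := hX _ hdense
  have hD : ∀ n i, BaireOne fun y => f (p n i, y) := hpD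
  choose h hhc hht using hD
  have lo : ∀ n, LinearOrder (I n) := fun n => IsWellOrder.linearOrder WellOrderingRel
  have ha0 : ∀ n (i : I n) x, 0 ≤ φ n i x := fun n i x => ((hφ n).2.1 i x).1
  have hfin : ∀ n x, {i : I n | φ n i x ≠ 0}.Finite := fun n x =>
    ((hφ n).2.2.1.point_finite x).subset fun i hi => subset_closure hi
  have hSmem : ∀ n x (i : I n), i ∈ (hfin n x).toFinset ↔ φ n i x ≠ 0 := fun n x i =>
    (hfin n x).mem_toFinset
  have hSpos : ∀ n x, ∀ i ∈ (hfin n x).toFinset, 0 < φ n i x := fun n x i hi =>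
    lt_of_le_of_ne (ha0 n i x) (Ne.symm ((hSmem n x i).1 hi))
  have hSne : ∀ n x, ((hfin n x).toFinset).Nonempty := by
    intro n x
    rcases Finset.eq_empty_or_nonempty ((hfin n x).toFinset) with he | hne'
    · exfalso
      have hz : ∀ i : I n, φ n i x = 0 := by
        intro i
        by_contra hne0
        have hmem : i ∈ (hfin n x).toFinset := (hSmem n x i).2 hne0
        rw [he] at hmem
        exact absurd hmem (Finset.notMem_empty i)
      have hone := (hφ n).2.2.2 x
      rw [finsum_eq_zero_of_forall_eq_zero hz] at hone
      exact zero_ne_one hone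
    · exact hne'
  refine ⟨fun n q => @comb (I n) Z (lo n) lam (f q₀) (fun i => f (p n i, q.2))
      (fun i => φ n i q.1) 0 ((hfin n q.1).toFinset), ?_, ?_⟩
  · intro n
    letI := lo n
    refine ⟨fun m q => comb lam (f q₀) (fun i => h n i m q.2) (fun i => φ n i q.1)
        (1 / ((m : ℝ) + 1)) ((hfin n q.1).toFinset), ?_, ?_⟩
    · intro m
      rw [continuous_iff_continuousAt]
      intro q
      obtain ⟨U, hU, hUfin⟩ := (hφ n).2.2.1 q.1
      have hcontT : Continuous fun q' : X × Y => comb lam (f q₀) (fun i => h n i m q'.2)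
          (fun i => φ n i q'.1) (1 / ((m : ℝ) + 1)) hUfin.toFinset := by
        refine comb_continuous lam (f q₀) hlam.continuousOn _
          (fun i => (hhc n i m).comp continuous_snd) _
          (fun i => ((hφ n).1 i).comp continuous_fst) (fun i w => ha0 n i w.1) ?_ _
        positivity
      refine hcontT.continuousAt.congr ?_
      refine Filter.eventually_of_mem (prod_mem_nhds hU Filter.univ_mem) ?_
      rintro ⟨x, y⟩ ⟨hx, -⟩
      have hset : (hfin n x).toFinset = hUfin.toFinset.filter (fun i => φ n i x ≠ 0) := by
        ext i
        simp only [Finset.mem_filter, Set.Finite.mem_toFinset, Set.mem_setOf_eq]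
        constructor
        · intro hne0
          exact ⟨⟨x, subset_closure (Function.mem_support.mpr hne0), hx⟩, hne0⟩
        · exact fun hh => hh.2
      show _ = comb lam (f q₀) (fun i => h n i m y) (fun i => φ n i x)
          (1 / ((m : ℝ) + 1)) ((hfin n x).toFinset)
      rw [hset, comb_filter lam (f q₀) hlam.map_zero]
    · intro q
      have hbase := comb_tendsto lam (f q₀) hlam.continuousOn
        (fun m i => h n i m q.2) (fun i => f (p n i, q.2)) (fun i => φ n i q.1)
        ((hfin n q.1).toFinset) (fun i _ => hht n i q.2) (fun i _ => ha0 n i q.1)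
      refine Filter.Tendsto.congr' ?_ hbase
      have hev : ∀ᶠ m : ℕ in Filter.atTop, ∀ i ∈ (hfin n q.1).toFinset,
          1 / ((m : ℝ) + 1) ≤ φ n i q.1 := by
        rw [eventually_all_finset]
        intro i hi
        exact (tendsto_one_div_add_atTop_nhds_zero_nat.eventually_lt_const
          (hSpos n q.1 i hi)).mono fun m hm => hm.le
      refine hev.mono fun m hm => ?_
      exact (comb_delta_eq lam (f q₀) _ _ (by positivity) _ hm
        (fun i _ => ha0 n i q.1)).symm
  · rintro ⟨x, y⟩
    rw [Filter.tendsto_def]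
    intro W hW
    obtain ⟨V, hV, hVW⟩ := hconv (f (x, y)) W hW
    have hUx : (fun x' => f (x', y)) ⁻¹' V ∈ nhds x :=
      ((hsep y).continuousAt).preimage_mem_nhds hV
    obtain ⟨n₀, hn₀⟩ := hPP x _ hUx
    rw [Filter.mem_atTop_sets]
    refine ⟨n₀, fun n hn => ?_⟩
    letI := lo n
    have hzV : ∀ i ∈ (hfin n x).toFinset, f (p n i, y) ∈ V := by
      intro i hi
      have hxc : x ∈ closure (Function.support (φ n i)) :=
        subset_closure (Function.mem_support.mpr ((hSmem n x i).1 hi))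
      exact hn₀ n hn i hxc
    obtain ⟨k, hk⟩ := comb_mem lam (f q₀) hlam.map_one
      (fun i => f (p n i, y)) (fun i => φ n i x) ((hfin n x).toFinset)
      (hSne n x) (hSpos n x) hzV
    exact hVW (lambdaIterSet_subset_infty lam hlam.map_zero V k hk)
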